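/- Let κ₁, κ₂ > −1/2 and κ₃ > −1. The map ψ(u,v) = (u, 𝔱(u,v)) is a bijection from Λ_{a,b,c} onto B²₊, with inverse ψ⁻¹(s,t) = (s, sqrt((b−a)t² + a(1−s²) + c s²)). Moreover, for every measurable f on Λ_{a,b,c} such that f·W^κ_{a,b,c} is integrable, ∫_{Λ_{a,b,c}} f(u,v) W^κ_{a,b,c}(u,v) du dv = (b−a) ∫_{B²₊} f(ψ⁻¹(s,t)) W_B^κ(s,t) ds dt. -/

import Mathlib

open MeasureTheory

noncomputable section

/-- The upper half `Λ_{a,b,c}` of the fully symmetric domain `Ω_{a,b,c}`. -/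
def LamSet (a b c : ℝ) : Set (ℝ × ℝ) :=
  {p | a + (c - a) * p.1 ^ 2 ≤ p.2 ^ 2 ∧ p.2 ^ 2 ≤ b + (c - b) * p.1 ^ 2 ∧
       |p.1| ≤ 1 ∧ 0 ≤ p.2}

/-- The closed upper half-disk `B²₊`. -/
def Bplus : Set (ℝ × ℝ) := {p | p.1 ^ 2 + p.2 ^ 2 ≤ 1 ∧ 0 ≤ p.2}

/-- The function `𝔱(u,v) = sqrt((−a+(a−c)u²+v²)/(b−a))`. -/
def frakt (a b c : ℝ) (p : ℝ × ℝ) : ℝ :=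
  Real.sqrt ((-a + (a - c) * p.1 ^ 2 + p.2 ^ 2) / (b - a))

/-- The map `ψ(u,v) = (u, 𝔱(u,v))`. -/
def psiMap (a b c : ℝ) (p : ℝ × ℝ) : ℝ × ℝ := (p.1, frakt a b c p)

/-- The inverse map `ψ⁻¹(s,t) = (s, sqrt((b−a)t² + a(1−s²) + cs²))`. -/
def psiInvMap (a b c : ℝ) (p : ℝ × ℝ) : ℝ × ℝ :=
  (p.1, Real.sqrt ((b - a) * p.2 ^ 2 + a * (1 - p.1 ^ 2) + c * p.1 ^ 2))

/-- The weight `W^κ_{a,b,c}` on `Λ_{a,b,c}`. -/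
def Wabc (a b c κ1 κ2 κ3 : ℝ) (p : ℝ × ℝ) : ℝ :=
  |p.2| * |p.1| ^ (2 * κ1) *
    ((-a + (a - c) * p.1 ^ 2 + p.2 ^ 2) / (b - a)) ^ (κ2 - 1 / 2) *
    ((b - (b - c) * p.1 ^ 2 - p.2 ^ 2) / (b - a)) ^ κ3

/-- The weight `W_B^κ(s,t) = |s|^{2κ₁} |t|^{2κ₂} (1−s²−t²)^{κ₃}` on the disk. -/
def WBdisk (κ1 κ2 κ3 : ℝ) (p : ℝ × ℝ) : ℝ :=
  |p.1| ^ (2 * κ1) * |p.2| ^ (2 * κ2) * (1 - p.1 ^ 2 - p.2 ^ 2) ^ κ3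

lemma graph_null (g : ℝ → ℝ) (hg : Measurable g) :
    volume {p : ℝ × ℝ | p.2 = g p.1} = 0 := by
  rw [MeasureTheory.Measure.volume_eq_prod, Measure.prod_apply (measurableSet_graph hg)]
  have h : ∀ x : ℝ, (Prod.mk x ⁻¹' {p : ℝ × ℝ | p.2 = g p.1}) = {g x} := by
    intro x; ext y; simp
  simp [h]

lemma hasFDerivAt_psiInvMap (a b c : ℝ) (p : ℝ × ℝ)
    (hpos : 0 < (b - a) * p.2 ^ 2 + a * (1 - p.1 ^ 2) + c * p.1 ^ 2) :
    HasFDerivAt (psiInvMap a b c)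
      (LinearMap.toContinuousLinearMap (Matrix.toLin (Module.Basis.finTwoProd ℝ) (Module.Basis.finTwoProd ℝ)
        !![1, 0;
           (c - a) * p.1 / Real.sqrt ((b - a) * p.2 ^ 2 + a * (1 - p.1 ^ 2) + c * p.1 ^ 2),
           (b - a) * p.2 / Real.sqrt ((b - a) * p.2 ^ 2 + a * (1 - p.1 ^ 2) + c * p.1 ^ 2)])) p := by
  rw [Matrix.toLin_finTwoProd_toContinuousLinearMap]
  have h3 : HasFDerivAt (fun q : ℝ × ℝ => q.1 ^ 2)
      ((2 * p.1) • ContinuousLinearMap.fst ℝ ℝ ℝ) p := by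
    have := (hasDerivAt_pow 2 p.1).comp_hasFDerivAt p (hasFDerivAt_fst (𝕜 := ℝ) (p := p))
    simp at this
    exact this
  have h2 : HasFDerivAt (fun q : ℝ × ℝ => q.2 ^ 2)
      ((2 * p.2) • ContinuousLinearMap.snd ℝ ℝ ℝ) p := by
    have := (hasDerivAt_pow 2 p.2).comp_hasFDerivAt p (hasFDerivAt_snd (𝕜 := ℝ) (p := p))
    simp at this
    exact this
  have hA : HasFDerivAt (fun q : ℝ × ℝ => (b - a) * q.2 ^ 2 + a * (1 - q.1 ^ 2) + c * q.1 ^ 2)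
      ((2 * (c - a) * p.1) • ContinuousLinearMap.fst ℝ ℝ ℝ
        + (2 * (b - a) * p.2) • ContinuousLinearMap.snd ℝ ℝ ℝ) p := by
    refine (((h2.const_mul (b - a)).add ((h3.const_sub 1).const_mul a)).add (h3.const_mul c)).congr_fderiv ?_
    refine ContinuousLinearMap.ext fun x => ?_
    simp
    ring
  have hne : Real.sqrt ((b - a) * p.2 ^ 2 + a * (1 - p.1 ^ 2) + c * p.1 ^ 2) ≠ 0 :=
    (Real.sqrt_pos.2 hpos).ne'
  have hs := hA.sqrt hpos.ne'
  refine ((hasFDerivAt_fst (𝕜 := ℝ) (p := p)).prodMk hs).congr_fderiv ?_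
  refine ContinuousLinearMap.ext fun x => ?_
  refine Prod.ext ?_ ?_ <;> simp <;> field_simp <;> ring

lemma Wabc_comp (a b c κ1 κ2 κ3 : ℝ) (ha : 0 ≤ a) (hab : a < b) (hc : 0 ≤ c)
    (s t : ℝ) (ht : 0 < t) (hst : s ^ 2 + t ^ 2 < 1) :
    |(b - a) * t / Real.sqrt ((b - a) * t ^ 2 + a * (1 - s ^ 2) + c * s ^ 2)| *
      Wabc a b c κ1 κ2 κ3 (psiInvMap a b c (s, t)) = (b - a) * WBdisk κ1 κ2 κ3 (s, t) := by
  have hba : (0 : ℝ) < b - a := sub_pos.2 hab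
  have hba' : b - a ≠ 0 := hba.ne'
  have hs2 : s ^ 2 < 1 := by nlinarith [sq_nonneg t]
  have hA : 0 < (b - a) * t ^ 2 + a * (1 - s ^ 2) + c * s ^ 2 := by
    nlinarith [mul_pos hba (pow_pos ht 2), mul_nonneg hc (sq_nonneg s)]
  have hv : 0 < Real.sqrt ((b - a) * t ^ 2 + a * (1 - s ^ 2) + c * s ^ 2) := Real.sqrt_pos.2 hA
  simp only [psiInvMap, Wabc, WBdisk]
  simp only [Real.sq_sqrt hA.le]
  have e1 : (-a + (a - c) * s ^ 2 + ((b - a) * t ^ 2 + a * (1 - s ^ 2) + c * s ^ 2)) / (b - a)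
      = t ^ 2 := by field_simp; ring
  have e2 : (b - (b - c) * s ^ 2 - ((b - a) * t ^ 2 + a * (1 - s ^ 2) + c * s ^ 2)) / (b - a)
      = 1 - s ^ 2 - t ^ 2 := by field_simp; ring
  rw [e1, e2, abs_of_pos hv, abs_of_pos (div_pos (mul_pos hba ht) hv)]
  have e3 : t * (t ^ 2 : ℝ) ^ (κ2 - 1 / 2) = |t| ^ (2 * κ2) := by
    have h2t : (t ^ 2 : ℝ) = t ^ (2 : ℝ) := by
      rw [← Real.rpow_natCast t 2]; norm_num
    rw [abs_of_pos ht, h2t, ← Real.rpow_mul ht.le, mul_comm, ← Real.rpow_add_one ht.ne']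
    congr 1; ring
  rw [← e3]
  generalize Real.sqrt ((b - a) * t ^ 2 + a * (1 - s ^ 2) + c * s ^ 2) = r at hv ⊢
  field_simp

/-- The open upper half-disk. -/
def Uset : Set (ℝ × ℝ) := {p | p.1 ^ 2 + p.2 ^ 2 < 1 ∧ 0 < p.2}

/-- The open version of `LamSet`. -/
def Vset (a b c : ℝ) : Set (ℝ × ℝ) :=
  {p | a + (c - a) * p.1 ^ 2 < p.2 ^ 2 ∧ p.2 ^ 2 < b + (c - b) * p.1 ^ 2 ∧ 0 < p.2}

/-- The Jacobian matrix of `ψ⁻¹` as a continuous linear map. -/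
def Bmat (a b c : ℝ) (p : ℝ × ℝ) : ℝ × ℝ →L[ℝ] ℝ × ℝ :=
  LinearMap.toContinuousLinearMap (Matrix.toLin (Module.Basis.finTwoProd ℝ) (Module.Basis.finTwoProd ℝ)
    !![1, 0;
       (c - a) * p.1 / Real.sqrt ((b - a) * p.2 ^ 2 + a * (1 - p.1 ^ 2) + c * p.1 ^ 2),
       (b - a) * p.2 / Real.sqrt ((b - a) * p.2 ^ 2 + a * (1 - p.1 ^ 2) + c * p.1 ^ 2)])

set_option maxHeartbeats 2000000 in
/-- `ψ` is a bijection from `Λ_{a,b,c}` onto `B²₊` with inverse `ψ⁻¹`,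
and the corresponding change-of-variables identity for the weights holds. -/
theorem psi_bijOn_and_integral_identity
    (a b c κ1 κ2 κ3 : ℝ) (ha : 0 ≤ a) (hab : a < b) (hc : 0 ≤ c)
    (hκ1 : -(1 : ℝ) / 2 < κ1) (hκ2 : -(1 : ℝ) / 2 < κ2) (hκ3 : -1 < κ3) :
    Set.BijOn (psiMap a b c) (LamSet a b c) Bplus ∧
    (∀ p ∈ LamSet a b c, psiInvMap a b c (psiMap a b c p) = p) ∧
    (∀ p ∈ Bplus, psiMap a b c (psiInvMap a b c p) = p) ∧
    ∀ f : ℝ × ℝ → ℝ, Measurable f →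
      IntegrableOn (fun p => f p * Wabc a b c κ1 κ2 κ3 p) (LamSet a b c) →
      ∫ p in LamSet a b c, f p * Wabc a b c κ1 κ2 κ3 p
        = (b - a) * ∫ p in Bplus, f (psiInvMap a b c p) * WBdisk κ1 κ2 κ3 p := by
  have hba : (0 : ℝ) < b - a := sub_pos.2 hab
  have hba' : b - a ≠ 0 := hba.ne'
  have hLnn : ∀ u : ℝ, u ^ 2 ≤ 1 → 0 ≤ a + (c - a) * u ^ 2 := by
    intro u hu
    nlinarith [mul_nonneg hc (sq_nonneg u)]
  -- left inverse
  have hleft : ∀ p ∈ LamSet a b c, psiInvMap a b c (psiMap a b c p) = p := by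
    rintro ⟨u, v⟩ hp
    obtain ⟨h1, h2, h3, h4⟩ := hp
    simp only at h1 h2 h3 h4
    have hnum : 0 ≤ (-a + (a - c) * u ^ 2 + v ^ 2) / (b - a) :=
      div_nonneg (by nlinarith) hba.le
    simp only [psiInvMap, psiMap, frakt]
    have e : (b - a) * Real.sqrt ((-a + (a - c) * u ^ 2 + v ^ 2) / (b - a)) ^ 2
        + a * (1 - u ^ 2) + c * u ^ 2 = v ^ 2 := by
      rw [Real.sq_sqrt hnum, mul_div_cancel₀ _ hba']; ring
    rw [e, Real.sqrt_sq h4]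
  -- right inverse
  have hright : ∀ p ∈ Bplus, psiMap a b c (psiInvMap a b c p) = p := by
    rintro ⟨s, t⟩ hp
    obtain ⟨h1, h2⟩ := hp
    simp only at h1 h2
    have hs2 : s ^ 2 ≤ 1 := by nlinarith [sq_nonneg t]
    have hAnn : 0 ≤ (b - a) * t ^ 2 + a * (1 - s ^ 2) + c * s ^ 2 := by
      nlinarith [mul_nonneg hba.le (sq_nonneg t), mul_nonneg hc (sq_nonneg s)]
    simp only [psiMap, psiInvMap, frakt]
    rw [Real.sq_sqrt hAnn]
    have e : (-a + (a - c) * s ^ 2 + ((b - a) * t ^ 2 + a * (1 - s ^ 2) + c * s ^ 2)) / (b - a)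
        = t ^ 2 := by field_simp; ring
    rw [e, Real.sqrt_sq h2]
  -- maps to
  have hmaps1 : Set.MapsTo (psiMap a b c) (LamSet a b c) Bplus := by
    rintro ⟨u, v⟩ hp
    obtain ⟨h1, h2, h3, h4⟩ := hp
    simp only at h1 h2 h3 h4
    have hnum : 0 ≤ (-a + (a - c) * u ^ 2 + v ^ 2) / (b - a) :=
      div_nonneg (by nlinarith) hba.le
    have h5 : (-a + (a - c) * u ^ 2 + v ^ 2) / (b - a) ≤ 1 - u ^ 2 := by
      rw [div_le_iff₀ hba]; nlinarith
    constructor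
    · show u ^ 2 + frakt a b c (u, v) ^ 2 ≤ 1
      rw [frakt, Real.sq_sqrt hnum]
      linarith
    · exact Real.sqrt_nonneg _
  have hmaps2 : Set.MapsTo (psiInvMap a b c) Bplus (LamSet a b c) := by
    rintro ⟨s, t⟩ hp
    obtain ⟨h1, h2⟩ := hp
    simp only at h1 h2
    have hs2 : s ^ 2 ≤ 1 := by nlinarith [sq_nonneg t]
    have hAnn : 0 ≤ (b - a) * t ^ 2 + a * (1 - s ^ 2) + c * s ^ 2 := by
      nlinarith [mul_nonneg hba.le (sq_nonneg t), mul_nonneg hc (sq_nonneg s)]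
    refine ⟨?_, ?_, ?_, Real.sqrt_nonneg _⟩
    · show a + (c - a) * s ^ 2 ≤ Real.sqrt ((b - a) * t ^ 2 + a * (1 - s ^ 2) + c * s ^ 2) ^ 2
      rw [Real.sq_sqrt hAnn]
      nlinarith [mul_nonneg hba.le (sq_nonneg t)]
    · show Real.sqrt ((b - a) * t ^ 2 + a * (1 - s ^ 2) + c * s ^ 2) ^ 2 ≤ b + (c - b) * s ^ 2
      rw [Real.sq_sqrt hAnn]
      nlinarith
    · show |s| ≤ 1
      rw [abs_le]
      constructor <;> nlinarith [sq_nonneg (s - 1), sq_nonneg (s + 1)]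
  refine ⟨Set.InvOn.bijOn ⟨fun p hp => hleft p hp, fun p hp => hright p hp⟩ hmaps1 hmaps2,
    hleft, hright, ?_⟩
  -- the integral identity
  intro f hf _hint
  set U : Set (ℝ × ℝ) := Uset with hUdef
  set V : Set (ℝ × ℝ) := Vset a b c with hVdef
  have hUopen : IsOpen U :=
    (isOpen_lt ((continuous_fst.pow 2).add (continuous_snd.pow 2)) continuous_const).inter
      (isOpen_lt continuous_const continuous_snd)
  have hUmeas : MeasurableSet U := hUopen.measurableSet
  have hApos : ∀ p ∈ U, 0 < (b - a) * p.2 ^ 2 + a * (1 - p.1 ^ 2) + c * p.1 ^ 2 := by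
    rintro ⟨s, t⟩ hp
    obtain ⟨h1, h2⟩ := hp
    simp only at h1 h2
    nlinarith [mul_pos hba (pow_pos h2 2), mul_nonneg hc (sq_nonneg s), sq_nonneg t]
  have hUsubB : U ⊆ Bplus := by
    rintro ⟨s, t⟩ hp
    exact ⟨le_of_lt hp.1, le_of_lt hp.2⟩
  have hVsubL : V ⊆ LamSet a b c := by
    rintro ⟨u, v⟩ hp
    obtain ⟨h1, h2, h3⟩ := hp
    simp only at h1 h2 h3
    have hu2 : u ^ 2 ≤ 1 := by nlinarith
    refine ⟨le_of_lt h1, le_of_lt h2, ?_, le_of_lt h3⟩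
    show |u| ≤ 1
    rw [abs_le]
    constructor <;> nlinarith [sq_nonneg (u - 1), sq_nonneg (u + 1)]
  -- injectivity of the inverse map on U
  have hinj : Set.InjOn (psiInvMap a b c) U := by
    rintro ⟨s, t⟩ hp ⟨s', t'⟩ hq h
    have h1 : s = s' := congrArg Prod.fst h
    subst h1
    have h2 := congrArg Prod.snd h
    simp only [psiInvMap] at h2
    have hA1 := hApos _ hp
    have hA2 := hApos _ hq
    have h3 : (b - a) * t ^ 2 + a * (1 - s ^ 2) + c * s ^ 2
        = (b - a) * t' ^ 2 + a * (1 - s ^ 2) + c * s ^ 2 := by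
      have h4 := congrArg (fun x => x ^ 2) h2
      simpa [Real.sq_sqrt hA1.le, Real.sq_sqrt hA2.le] using h4
    have ht2 : t ^ 2 = t' ^ 2 :=
      mul_left_cancel₀ hba' (by linarith : (b - a) * t ^ 2 = (b - a) * t' ^ 2)
    have ht : (0:ℝ) < t := hp.2
    have ht' : (0:ℝ) < t' := hq.2
    have : t = t' := by
      have h5 := congrArg Real.sqrt ht2
      rwa [Real.sqrt_sq ht.le, Real.sqrt_sq ht'.le] at h5
    simp [this]
  -- the image of U under the inverse map is V
  have himg : psiInvMap a b c '' U = V := by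
    ext p
    constructor
    · rintro ⟨q, hq, rfl⟩
      have hA1 := hApos q hq
      obtain ⟨h1, h2⟩ := hq
      refine ⟨?_, ?_, Real.sqrt_pos.2 hA1⟩
      · show a + (c - a) * q.1 ^ 2
            < Real.sqrt ((b - a) * q.2 ^ 2 + a * (1 - q.1 ^ 2) + c * q.1 ^ 2) ^ 2
        rw [Real.sq_sqrt hA1.le]
        nlinarith [mul_pos hba (pow_pos h2 2)]
      · show Real.sqrt ((b - a) * q.2 ^ 2 + a * (1 - q.1 ^ 2) + c * q.1 ^ 2) ^ 2
            < b + (c - b) * q.1 ^ 2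
        rw [Real.sq_sqrt hA1.le]
        nlinarith
    · rintro hp
      obtain ⟨h1, h2, h3⟩ := hp
      refine ⟨psiMap a b c p, ?_, hleft p (hVsubL ⟨h1, h2, h3⟩)⟩
      have hnumpos : 0 < (-a + (a - c) * p.1 ^ 2 + p.2 ^ 2) / (b - a) :=
        div_pos (by nlinarith) hba
      constructor
      · show (psiMap a b c p).1 ^ 2 + (psiMap a b c p).2 ^ 2 < 1
        simp only [psiMap, frakt]
        rw [Real.sq_sqrt hnumpos.le]
        have h6 : (-a + (a - c) * p.1 ^ 2 + p.2 ^ 2) / (b - a) < 1 - p.1 ^ 2 := by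
          rw [div_lt_iff₀ hba]; nlinarith
        linarith
      · show 0 < (psiMap a b c p).2
        exact Real.sqrt_pos.2 hnumpos
  -- null boundary parts
  have hLV : volume (LamSet a b c \ V) = 0 := by
    have hsub : LamSet a b c \ V ⊆ {p : ℝ × ℝ | p.2 = Real.sqrt (a + (c - a) * p.1 ^ 2)}
        ∪ {p : ℝ × ℝ | p.2 = Real.sqrt (b + (c - b) * p.1 ^ 2)} := by
      rintro ⟨u, v⟩ ⟨hmem, hnv⟩
      obtain ⟨h1, h2, h3, h4⟩ := hmem
      simp only at h1 h2 h3 h4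
      have hu2 : u ^ 2 ≤ 1 := by nlinarith [abs_le.1 h3, abs_nonneg u, sq_abs u]
      rcases eq_or_lt_of_le h1 with heq | hlt
      · left
        show v = Real.sqrt (a + (c - a) * u ^ 2)
        rw [heq, Real.sqrt_sq h4]
      · rcases eq_or_lt_of_le h2 with heq2 | hlt2
        · right
          show v = Real.sqrt (b + (c - b) * u ^ 2)
          rw [← heq2, Real.sqrt_sq h4]
        · exfalso
          have hv0 : ¬ (0:ℝ) < v := fun hv => hnv ⟨hlt, hlt2, hv⟩
          have hv1 : v = 0 := le_antisymm (not_lt.1 hv0) h4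
          have hL := hLnn u hu2
          nlinarith
    exact measure_mono_null hsub (measure_union_null
      (graph_null (fun u => Real.sqrt (a + (c - a) * u ^ 2)) (by fun_prop))
      (graph_null (fun u => Real.sqrt (b + (c - b) * u ^ 2)) (by fun_prop)))
  have hBU : volume (Bplus \ U) = 0 := by
    have hsub : Bplus \ U ⊆ {p : ℝ × ℝ | p.2 = (0 : ℝ)}
        ∪ {p : ℝ × ℝ | p.2 = Real.sqrt (1 - p.1 ^ 2)} := by
      rintro ⟨s, t⟩ ⟨hmem, hn⟩
      obtain ⟨h1, h2⟩ := hmem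
      simp only at h1 h2
      rcases eq_or_lt_of_le h2 with heq | hlt
      · left; exact heq.symm
      · right
        have h3 : s ^ 2 + t ^ 2 = 1 := by
          by_contra hne
          exact hn ⟨lt_of_le_of_ne h1 hne, hlt⟩
        show t = Real.sqrt (1 - s ^ 2)
        have h5 : 1 - s ^ 2 = t ^ 2 := by linarith
        rw [h5, Real.sqrt_sq hlt.le]
    exact measure_mono_null hsub (measure_union_null
      (graph_null (fun _ => 0) measurable_const)
      (graph_null (fun u => Real.sqrt (1 - u ^ 2)) (by fun_prop)))
  have hLaeV : LamSet a b c =ᵐ[volume] V := by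
    rw [MeasureTheory.ae_eq_set]
    exact ⟨hLV, by simp [Set.diff_eq_empty.2 hVsubL]⟩
  have hUaeB : U =ᵐ[volume] Bplus := by
    rw [MeasureTheory.ae_eq_set]
    exact ⟨by simp [Set.diff_eq_empty.2 hUsubB], hBU⟩
  set Bmap : ℝ × ℝ → (ℝ × ℝ →L[ℝ] ℝ × ℝ) := Bmat a b c with hBmap
  have hderiv : ∀ p ∈ U, HasFDerivWithinAt (psiInvMap a b c) (Bmap p) U p := fun p hp =>
    (hasFDerivAt_psiInvMap a b c p (hApos p hp)).hasFDerivWithinAt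
  have hchange : ∫ p in psiInvMap a b c '' U, f p * Wabc a b c κ1 κ2 κ3 p
      = ∫ p in U, |(Bmap p).det|
          • (f (psiInvMap a b c p) * Wabc a b c κ1 κ2 κ3 (psiInvMap a b c p)) :=
    integral_image_eq_integral_abs_det_fderiv_smul volume hUmeas hderiv hinj
      (fun q => f q * Wabc a b c κ1 κ2 κ3 q)
  have hpt : ∀ p ∈ U, |(Bmap p).det|
      • (f (psiInvMap a b c p) * Wabc a b c κ1 κ2 κ3 (psiInvMap a b c p))
      = (b - a) * (f (psiInvMap a b c p) * WBdisk κ1 κ2 κ3 p) := by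
    rintro ⟨s, t⟩ hp
    have hA1 := hApos _ hp
    obtain ⟨h1, h2⟩ := hp
    simp only at h1 h2
    have hv : 0 < Real.sqrt ((b - a) * t ^ 2 + a * (1 - s ^ 2) + c * s ^ 2) :=
      Real.sqrt_pos.2 hA1
    have hdet : (Bmap (s, t)).det
        = (b - a) * t / Real.sqrt ((b - a) * t ^ 2 + a * (1 - s ^ 2) + c * s ^ 2) := by
      rw [hBmap, Bmat]
      simp only [LinearMap.det_toContinuousLinearMap, LinearMap.det_toLin,
        Matrix.det_fin_two_of]
      ring
    rw [hdet, smul_eq_mul]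
    have key := Wabc_comp a b c κ1 κ2 κ3 ha hab hc s t h2 h1
    linear_combination (f (psiInvMap a b c (s, t))) * key
  calc ∫ p in LamSet a b c, f p * Wabc a b c κ1 κ2 κ3 p
      = ∫ p in V, f p * Wabc a b c κ1 κ2 κ3 p := setIntegral_congr_set hLaeV
    _ = ∫ p in psiInvMap a b c '' U, f p * Wabc a b c κ1 κ2 κ3 p := by rw [himg]
    _ = ∫ p in U, |(Bmap p).det|
          • (f (psiInvMap a b c p) * Wabc a b c κ1 κ2 κ3 (psiInvMap a b c p)) := hchange
    _ = ∫ p in U, (b - a) * (f (psiInvMap a b c p) * WBdisk κ1 κ2 κ3 p) :=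
        setIntegral_congr_fun hUmeas hpt
    _ = (b - a) * ∫ p in U, f (psiInvMap a b c p) * WBdisk κ1 κ2 κ3 p :=
        integral_const_mul _ _
    _ = (b - a) * ∫ p in Bplus, f (psiInvMap a b c p) * WBdisk κ1 κ2 κ3 p := by
        rw [setIntegral_congr_set hUaeB]
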